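/- For positive constants w, γ, c and any real δ > G(0), the equation G(p) = δ has a unique nonnegative root, where G(p) = w·log₂(1+pγ) − w(p+c)γ/((1+pγ)·ln 2). -/

import Mathlib

theorem G_unique_root (w γ c δ : ℝ) (hw : 0 < w) (hγ : 0 < γ) (hc : 0 < c)
    (G : ℝ → ℝ)
    (hG : ∀ p, G p = w * Real.logb 2 (1 + p * γ) - w * (p + c) * γ / ((1 + p * γ) * Real.log 2))
    (hδ : G 0 < δ) :
    ∃! p : ℝ, 0 ≤ p ∧ G p = δ := by
  have hln2 : 0 < Real.log 2 := Real.log_pos one_lt_two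
  set F : ℝ → ℝ := fun p => Real.log (1 + p * γ) - (p + c) * γ / (1 + p * γ) with hFdef
  have hGF : ∀ p, 0 ≤ p → G p = (w / Real.log 2) * F p := by
    intro p hp
    have hx : 0 < 1 + p * γ := by positivity
    rw [hG, Real.logb, hFdef]
    field_simp
  have hF : ∀ p : ℝ, 0 ≤ p → HasDerivAt F (γ ^ 2 * (p + c) / (1 + p * γ) ^ 2) p := by
    intro p hp
    have hx : 0 < 1 + p * γ := by positivity
    have h1 : HasDerivAt (fun q : ℝ => 1 + q * γ) γ p := by
      simpa using ((hasDerivAt_id p).mul_const γ).const_add 1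
    have hlog : HasDerivAt (fun q : ℝ => Real.log (1 + q * γ)) (γ / (1 + p * γ)) p :=
      h1.log (ne_of_gt hx)
    have h2 : HasDerivAt (fun q : ℝ => (q + c) * γ) γ p := by
      simpa using ((hasDerivAt_id p).add_const c).mul_const γ
    have hdiv : HasDerivAt (fun q : ℝ => (q + c) * γ / (1 + q * γ))
        ((γ * (1 + p * γ) - (p + c) * γ * γ) / (1 + p * γ) ^ 2) p := h2.div h1 (ne_of_gt hx)
    have := hlog.sub hdiv
    refine this.congr_deriv ?_
    field_simp
    ring
  have hmono : StrictMonoOn F (Set.Ici 0) := by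
    apply strictMonoOn_of_deriv_pos (convex_Ici 0)
    · intro p hp
      exact (hF p hp).continuousAt.continuousWithinAt
    · intro p hp
      rw [interior_Ici] at hp
      rw [(hF p hp.le).deriv]
      have hp0 : (0:ℝ) ≤ p := hp.le
      have hx : 0 < 1 + p * γ := by positivity
      have hpc : 0 < p + c := by linarith [hp0]
      exact div_pos (mul_pos (pow_pos hγ 2) hpc) (pow_pos hx 2)
  have hk : 0 < w / Real.log 2 := by positivity
  have hGmono : StrictMonoOn G (Set.Ici 0) := by
    intro a ha b hb hab
    rw [hGF a ha, hGF b hb]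
    exact mul_lt_mul_of_pos_left (hmono ha hb hab) hk
  -- choose P large
  set M := δ * Real.log 2 / w + 1 + c * γ with hM
  set P := Real.exp M / γ with hP
  have hP0 : 0 < P := by positivity
  have hPγ : P * γ = Real.exp M := by
    rw [hP]; field_simp
  have hxP : 0 < 1 + P * γ := by positivity
  have hFP : δ * Real.log 2 / w ≤ F P := by
    have hlog1 : M ≤ Real.log (1 + P * γ) := by
      calc M = Real.log (Real.exp M) := (Real.log_exp M).symm
        _ ≤ Real.log (1 + P * γ) := by
            apply Real.log_le_log (Real.exp_pos M)
            rw [← hPγ]; linarith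
    have hfrac : (P + c) * γ / (1 + P * γ) ≤ 1 + c * γ := by
      rw [div_le_iff₀ hxP]
      nlinarith [mul_pos (mul_pos hc hP0) (mul_pos hγ hγ)]
    rw [hFdef]
    simp only
    rw [hM] at hlog1
    linarith
  have hGP : δ ≤ G P := by
    rw [hGF P hP0.le]
    have heq : (w / Real.log 2) * (δ * Real.log 2 / w) = δ := by
      field_simp
    calc δ = (w / Real.log 2) * (δ * Real.log 2 / w) := heq.symm
      _ ≤ (w / Real.log 2) * F P := by
          exact mul_le_mul_of_nonneg_left hFP hk.le
  have hcont : ContinuousOn G (Set.Icc 0 P) := by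
    intro p hp
    have hFc : ContinuousAt F p := (hF p hp.1).continuousAt
    have h1 : ContinuousWithinAt (fun q => (w / Real.log 2) * F q) (Set.Icc 0 P) p :=
      (continuousAt_const.mul hFc).continuousWithinAt
    exact h1.congr (fun q hq => hGF q hq.1) (hGF p hp.1)
  have hivt := intermediate_value_Icc hP0.le hcont
  have hδmem : δ ∈ Set.Icc (G 0) (G P) := ⟨hδ.le, hGP⟩
  obtain ⟨p, hpmem, hpδ⟩ := hivt hδmem
  refine ⟨p, ⟨hpmem.1, hpδ⟩, ?_⟩
  intro q ⟨hq0, hqδ⟩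
  exact hGmono.injOn hq0 hpmem.1 (by rw [hqδ, hpδ])
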